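/- Let C = {x_0(x_1+x_2) + (x_1−x_2)^2 = 0} ⊂ ℙ^2. The point (0:1:−1) has Hadamard-C-rank exactly 3: it cannot be written as a Hadamard product of two points of C, but equals (0:1:1) ⋆ (−1:6:3) ⋆ (9:1:−2), all three factors lying on C. -/

import Mathlib

open MvPolynomial

/-- A polynomial vanishes identically on a set of points of affine space. -/
def vanishesOn {n : ℕ} (f : MvPolynomial (Fin n) ℂ) (S : Set (Fin n → ℂ)) : Prop :=
  ∀ v ∈ S, MvPolynomial.eval v f = 0

/-- Zariski closure of a set of points: the zero locus of its vanishing ideal. -/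
def zclosure {n : ℕ} (S : Set (Fin n → ℂ)) : Set (Fin n → ℂ) :=
  {v | ∀ f : MvPolynomial (Fin n) ℂ, vanishesOn f S → MvPolynomial.eval v f = 0}

/-- Zariski-irreducibility: nonempty and the vanishing ideal is prime. -/
def ZIrred {n : ℕ} (S : Set (Fin n → ℂ)) : Prop :=
  S.Nonempty ∧ ∀ f g : MvPolynomial (Fin n) ℂ,
    vanishesOn (f * g) S → vanishesOn f S ∨ vanishesOn g S

/-- Krull dimension of (the Zariski closure of) a set, as the order-theoretic
Krull dimension of chains of irreducible Zariski-closed subsets of it. -/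
noncomputable def zdim {n : ℕ} (S : Set (Fin n → ℂ)) : WithBot ℕ∞ :=
  Order.krullDim {T : Set (Fin n → ℂ) // zclosure T = T ∧ ZIrred T ∧ T ⊆ zclosure S}

/-- Projective equality of coordinate vectors: equality up to a nonzero scalar. -/
def ProjEq {n : ℕ} (v w : Fin n → ℂ) : Prop :=
  ∃ c : ℂ, c ≠ 0 ∧ w = c • v

/-- The set of (representatives of) Hadamard products of `m` points of `X`. -/
def hprodSet {n : ℕ} (X : Set (Fin n → ℂ)) (m : ℕ) : Set (Fin n → ℂ) :=
  {p | ∃ f : Fin m → (Fin n → ℂ), (∀ i, f i ∈ X) ∧ ProjEq (∏ i, f i) p}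

/-- The `m`-th Hadamard power of `X`: the Zariski closure of the set of Hadamard
products of `m` points of `X`. -/
def hpow {n : ℕ} (X : Set (Fin n → ℂ)) (m : ℕ) : Set (Fin n → ℂ) :=
  zclosure (hprodSet X m)

/-- `p` is an (actual) Hadamard product of `m` points of `X`. -/
def HadDecomp {n : ℕ} (X : Set (Fin n → ℂ)) (m : ℕ) (p : Fin n → ℂ) : Prop :=
  p ∈ hprodSet X m

/-- The Hadamard-`X`-rank of `p` is at most `r` (and finite, in particular). -/
def HrkLe {n : ℕ} (X : Set (Fin n → ℂ)) (r : ℕ) (p : Fin n → ℂ) : Prop :=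
  ∃ m, 1 ≤ m ∧ m ≤ r ∧ HadDecomp X m p

/-- The Hadamard-`X`-rank of `p` is exactly `r`. -/
def HrkEq {n : ℕ} (X : Set (Fin n → ℂ)) (r : ℕ) (p : Fin n → ℂ) : Prop :=
  HadDecomp X r p ∧ ∀ m, 1 ≤ m → m < r → ¬ HadDecomp X m p

/-- The Hadamard-`X`-rank of `p` is finite. -/
def HrkFin {n : ℕ} (X : Set (Fin n → ℂ)) (p : Fin n → ℂ) : Prop :=
  ∃ m, 1 ≤ m ∧ HadDecomp X m p

/-- `X ⊂ ℙ^{n-1}` is strongly concise: for each coordinate `i` there is a point of `X`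
whose `i`-th coordinate vanishes and all other coordinates are nonzero. -/
def StronglyConcise {n : ℕ} (X : Set (Fin n → ℂ)) : Prop :=
  ∀ i : Fin n, ∃ v ∈ X, v i = 0 ∧ ∀ j ≠ i, v j ≠ 0

/-- for the conic `C = {x₀(x₁+x₂) + (x₁−x₂)² = 0} ⊂ ℙ²`, the point
`(0:1:−1)` has Hadamard-`C`-rank exactly `3`, witnessed by
`(0:1:−1) = (0:1:1) ⋆ (−1:6:3) ⋆ (9:1:−2)`. -/
theorem stmt10 (C : Set (Fin 3 → ℂ))
    (hC : C = {v | v ≠ 0 ∧ v 0 * (v 1 + v 2) + (v 1 - v 2) ^ 2 = 0}) :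
    (![(0 : ℂ), 1, 1] ∈ C ∧ ![(-1 : ℂ), 6, 3] ∈ C ∧ ![(9 : ℂ), 1, -2] ∈ C) ∧
    ProjEq (![(0 : ℂ), 1, 1] * ![(-1 : ℂ), 6, 3] * ![(9 : ℂ), 1, -2]) ![(0 : ℂ), 1, -1] ∧
    HrkEq C 3 ![(0 : ℂ), 1, -1] := by

  subst hC
  set S : Set (Fin 3 → ℂ) := {v | v ≠ 0 ∧ v 0 * (v 1 + v 2) + (v 1 - v 2) ^ 2 = 0} with hS
  have key : ∀ v ∈ S, v 0 = 0 → v 1 = v 2 := by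
    intro v hv h0
    have h := hv.2
    rw [h0, zero_mul, zero_add, pow_eq_zero_iff (two_ne_zero)] at h
    exact sub_eq_zero.mp h
  have m1 : (![(0 : ℂ), 1, 1]) ∈ S := by
    refine ⟨fun h => ?_, by show (0:ℂ) * (1 + 1) + (1 - 1) ^ 2 = 0; norm_num⟩
    have := congrFun h 1; simp at this
  have m2 : (![(-1 : ℂ), 6, 3]) ∈ S := by
    refine ⟨fun h => ?_, by show (-1:ℂ) * (6 + 3) + (6 - 3) ^ 2 = 0; norm_num⟩
    have := congrFun h 1; simp at this
  have m3 : (![(9 : ℂ), 1, -2]) ∈ S := by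
    refine ⟨fun h => ?_, by show (9:ℂ) * (1 + -2) + (1 - -2) ^ 2 = 0; norm_num⟩
    have := congrFun h 1; simp at this
  refine ⟨⟨m1, m2, m3⟩, ?_, ?_, ?_⟩
  · refine ⟨6⁻¹, by norm_num, ?_⟩
    funext i
    fin_cases i <;> simp <;> norm_num
  · -- HadDecomp C 3
    refine ⟨![![(0 : ℂ), 1, 1], ![(-1 : ℂ), 6, 3], ![(9 : ℂ), 1, -2]], ?_, 6⁻¹, by norm_num, ?_⟩
    · intro i; fin_cases i <;> assumption
    · rw [Fin.prod_univ_three]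
      funext i
      fin_cases i <;> simp <;> norm_num
  · -- minimality
    intro m hm1 hm3 hdec
    interval_cases m
    · obtain ⟨f, hf, c, hc, hp⟩ := hdec
      rw [Fin.prod_univ_one] at hp
      set v := f 0 with hv
      have hvC := hf 0
      have e0 : (1 : ℂ) = c * v 1 := by
        have := congrFun hp 1; simpa using this
      have e2 : (-1 : ℂ) = c * v 2 := by
        have := congrFun hp 2; simpa using this
      have e00 : (0 : ℂ) = c * v 0 := by
        have := congrFun hp 0; simpa using this
      have hv0 : v 0 = 0 := by
        rcases mul_eq_zero.mp e00.symm with h | h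
        · exact absurd h hc
        · exact h
      have h12 : v 1 = v 2 := key v hvC hv0
      rw [h12] at e0
      rw [← e2] at e0
      norm_num at e0
    · obtain ⟨f, hf, c, hc, hp⟩ := hdec
      rw [Fin.prod_univ_two] at hp
      set v := f 0 with hvdef
      set w := f 1 with hwdef
      have hvC := hf 0
      have hwC := hf 1
      have e0 : (0 : ℂ) = c * (v 0 * w 0) := by
        have := congrFun hp 0; simpa using this
      have e1 : (1 : ℂ) = c * (v 1 * w 1) := by
        have := congrFun hp 1; simpa using this
      have e2 : (-1 : ℂ) = c * (v 2 * w 2) := by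
        have := congrFun hp 2; simpa using this
      have hvw0 : v 0 = 0 ∨ w 0 = 0 := by
        rcases mul_eq_zero.mp e0.symm with h | h
        · exact absurd h hc
        · exact mul_eq_zero.mp h
      -- symmetric argument
      have main : ∀ a b : Fin 3 → ℂ, a ∈ S → b ∈ S → a 0 = 0 →
          (1 : ℂ) = c * (a 1 * b 1) → (-1 : ℂ) = c * (a 2 * b 2) → False := by
        intro a b haC hbC ha0 f1 f2
        have h12 : a 1 = a 2 := key a haC ha0
        have ha1 : a 1 ≠ 0 := by
          intro h; rw [h] at f1; norm_num at f1
        -- from f1 and f2: b 2 = -b 1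
        have hb : b 2 = - b 1 := by
          have : c * (a 1 * b 1) + c * (a 1 * b 2) = 0 := by
            rw [← h12] at f2
            linear_combination -f1 - f2
          have := mul_eq_zero.mp (by linear_combination this : c * (a 1 * (b 1 + b 2)) = 0)
          rcases this with h | h
          · exact absurd h hc
          · rcases mul_eq_zero.mp h with h | h
            · exact absurd h ha1
            · linear_combination h
        have hb1 : b 1 ≠ 0 := by
          intro h; rw [h] at f1; norm_num at f1
        have heq := hbC.2
        rw [hb] at heq
        have : (2 * b 1) ^ 2 = 0 := by linear_combination heq
        have := pow_eq_zero_iff (two_ne_zero) |>.mp this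
        rcases mul_eq_zero.mp this with h | h
        · norm_num at h
        · exact hb1 h
      rcases hvw0 with h | h
      · exact main v w hvC hwC h e1 e2
      · exact main w v hwC hvC h (by linear_combination e1) (by linear_combination e2)
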